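/- At the point A_0 = (1/6, 1/6, 1/6), the cosine of the angle ∠A_iA_0A_j equals -1/3 for every pair of distinct vertices A_i, A_j of the tetrahedron {(0,0,0), (1,0,0), (0,1,0), (0,0,1)}. -/

import Mathlib

open RealInnerProductSpace

/-- At A₀ = (1/6,1/6,1/6), the cosine of every angle ∠AᵢA₀Aⱼ, for distinct
vertices of the tetrahedron {0, e₁, e₂, e₃}, equals -1/3. -/
theorem stmt_8 (V : Fin 4 → EuclideanSpace ℝ (Fin 3))
    (A₀ : EuclideanSpace ℝ (Fin 3))
    (hV0 : V 0 = (WithLp.equiv 2 (Fin 3 → ℝ)).symm ![0, 0, 0])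
    (hV1 : V 1 = (WithLp.equiv 2 (Fin 3 → ℝ)).symm ![1, 0, 0])
    (hV2 : V 2 = (WithLp.equiv 2 (Fin 3 → ℝ)).symm ![0, 1, 0])
    (hV3 : V 3 = (WithLp.equiv 2 (Fin 3 → ℝ)).symm ![0, 0, 1])
    (hA₀ : A₀ = (WithLp.equiv 2 (Fin 3 → ℝ)).symm ![1/6, 1/6, 1/6]) :
    ∀ i j : Fin 4, i ≠ j →
      ⟪V i - A₀, V j - A₀⟫ / (‖V i - A₀‖ * ‖V j - A₀‖) = -1/3 := by
  have h16 : Real.sqrt 16 = 4 := by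
    rw [show (16:ℝ) = 4^2 by norm_num, Real.sqrt_sq (by norm_num)]
  have h169 : Real.sqrt (16/9) = 4/3 := by
    rw [show (16/9:ℝ) = (4/3)^2 by norm_num, Real.sqrt_sq (by norm_num)]
  have h9 : Real.sqrt 9 = 3 := by
    rw [show (9:ℝ) = 3^2 by norm_num, Real.sqrt_sq (by norm_num)]
  have hV0' : V ⟨0, by omega⟩ = (WithLp.equiv 2 (Fin 3 → ℝ)).symm ![0, 0, 0] := hV0
  have hV1' : V ⟨1, by omega⟩ = (WithLp.equiv 2 (Fin 3 → ℝ)).symm ![1, 0, 0] := hV1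
  have hV2' : V ⟨2, by omega⟩ = (WithLp.equiv 2 (Fin 3 → ℝ)).symm ![0, 1, 0] := hV2
  have hV3' : V ⟨3, by omega⟩ = (WithLp.equiv 2 (Fin 3 → ℝ)).symm ![0, 0, 1] := hV3
  intro i j hij
  fin_cases i <;> fin_cases j <;>
    first
    | exact absurd rfl hij
    | · simp only [hV0', hV1', hV2', hV3', hA₀, PiLp.inner_apply, EuclideanSpace.norm_eq,
          Fin.sum_univ_three, WithLp.equiv_symm_apply, PiLp.toLp_apply, Matrix.cons_val, PiLp.sub_apply, Matrix.cons_val_zero,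
          Matrix.cons_val_one, Matrix.head_cons, Matrix.cons_val_two, Matrix.tail_cons,
          RCLike.inner_apply, conj_trivial]
        rw [← Real.sqrt_mul (by positivity)]
        norm_num [h16, h169, h9]
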